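/- arXiv:2303.10123 — 2 statements merged into one kernel-verified Lean document; each statement's English description precedes it below -/
import Mathlib

section
/- For every real δ and every real X ≥ 2, one has ∑_{p ≤ X, p prime} cos(δ · log p)/p = log|ζ(1 + 1/log X + iδ)| + O(1), where the implied constant is absolute. -/
open Finset Complex



/-- Chebyshev-type bound: `∑_{p ≤ n} log p ≤ n log 4`. -/
lemma theta_le (n : ℕ) :
    ∑ p ∈ (range (n + 1)).filter Nat.Prime, Real.log p ≤ n * Real.log 4 := by
  have h1 : ∑ p ∈ (range (n + 1)).filter Nat.Prime, Real.log p
      = Real.log (primorial n) := by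
    rw [primorial, Nat.cast_prod, Real.log_prod]
    intro p hp
    exact_mod_cast (Finset.mem_filter.mp hp).2.pos.ne'
  rw [h1]
  calc Real.log (primorial n) ≤ Real.log ((4:ℝ) ^ n) := by
        apply Real.log_le_log (by exact_mod_cast primorial_pos n)
        exact_mod_cast primorial_le_4_pow n
    _ = n * Real.log 4 := by rw [Real.log_pow]


/-- Mertens' first theorem, upper-bound form: `∑_{p ≤ n} log p / p ≤ 4 log n`. -/
lemma mertens1 (n : ℕ) :
    ∑ p ∈ (range (n + 1)).filter Nat.Prime, Real.log p / p ≤ 4 * Real.log n := by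
  induction n using Nat.strong_induction_on with
  | _ n ih =>
  rcases le_or_gt n 1 with hn | hn
  · have he : (range (n + 1)).filter Nat.Prime = ∅ := by
      rw [Finset.filter_eq_empty_iff]
      intro p hp
      simp only [Finset.mem_range] at hp
      have hp1 : p ≤ 1 := by omega
      intro hP
      have := hP.two_le
      omega
    rw [he, Finset.sum_empty]
    have := Real.log_natCast_nonneg n
    linarith
  -- n ≥ 2
  set m := n / 2 with hm
  have hmn : m < n := Nat.div_lt_self (by omega) (by omega)
  have hsplit : (range (n + 1)).filter Nat.Prime
      = ((range (m + 1)).filter Nat.Prime) ∪ ((Ico (m + 1) (n + 1)).filter Nat.Prime) := by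
    rw [← Finset.filter_union, Finset.range_eq_Ico, Finset.range_eq_Ico,
      Finset.Ico_union_Ico_eq_Ico (by omega) (by omega), ← Finset.range_eq_Ico]
  have hdisj : Disjoint ((range (m + 1)).filter Nat.Prime)
      ((Ico (m + 1) (n + 1)).filter Nat.Prime) := by
    apply Finset.disjoint_filter_filter
    rw [Finset.range_eq_Ico]
    exact Finset.Ico_disjoint_Ico_consecutive 0 (m+1) (n+1)
  rw [hsplit, Finset.sum_union hdisj]
  have hblock : ∑ p ∈ (Ico (m + 1) (n + 1)).filter Nat.Prime, Real.log p / p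
      ≤ 4 * Real.log 2 := by
    have h1 : ∑ p ∈ (Ico (m + 1) (n + 1)).filter Nat.Prime, Real.log p / p
        ≤ ∑ p ∈ (Ico (m + 1) (n + 1)).filter Nat.Prime, Real.log p * (2 / n) := by
      apply Finset.sum_le_sum
      intro p hp
      simp only [Finset.mem_filter, Finset.mem_Ico] at hp
      have hp2 : (2:ℕ) ≤ p := hp.2.two_le
      have hpn : (n:ℝ) < 2 * p := by
        have : n < 2 * (m + 1) := by omega
        have h2 : n < 2 * p := by omega
        exact_mod_cast h2
      have hlog : (0:ℝ) ≤ Real.log p := Real.log_nonneg (by exact_mod_cast hp2.trans' one_le_two)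
      rw [div_eq_mul_inv]
      apply mul_le_mul_of_nonneg_left _ hlog
      rw [inv_le_iff_one_le_mul₀ (by positivity)]
      rw [div_mul_eq_mul_div, le_div_iff₀ (by positivity)]
      nlinarith [hpn]
    refine h1.trans ?_
    rw [← Finset.sum_mul]
    have h2 : ∑ p ∈ (Ico (m + 1) (n + 1)).filter Nat.Prime, Real.log p
        ≤ n * Real.log 4 := by
      refine le_trans ?_ (theta_le n)
      apply Finset.sum_le_sum_of_subset_of_nonneg
      · apply Finset.filter_subset_filter
        intro x hx; simp only [Finset.mem_Ico] at hx; simp; omega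
      · intro p hp _
        simp only [Finset.mem_filter] at hp
        exact Real.log_nonneg (by exact_mod_cast hp.2.one_lt.le)
    calc (∑ p ∈ (Ico (m + 1) (n + 1)).filter Nat.Prime, Real.log p) * (2 / n)
        ≤ (n * Real.log 4) * (2 / n) := by
          apply mul_le_mul_of_nonneg_right h2 (by positivity)
      _ = 4 * Real.log 2 := by
          have hn0 : (n:ℝ) ≠ 0 := by positivity
          have : Real.log 4 = 2 * Real.log 2 := by
            rw [show (4:ℝ) = 2 ^ 2 by norm_num, Real.log_pow]; push_cast; ring
          field_simp; rw [this]; ring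
  have hIH : ∑ p ∈ (range (m + 1)).filter Nat.Prime, Real.log p / p ≤ 4 * Real.log m :=
    ih m hmn
  have hlogm : Real.log m ≤ Real.log n - Real.log 2 := by
    rw [← Real.log_div (by positivity) (by norm_num)]
    apply Real.log_le_log (by exact_mod_cast Nat.pos_of_ne_zero (by omega))
    rw [le_div_iff₀ (by norm_num)]
    have h2m : m * 2 ≤ n := by omega
    exact_mod_cast h2m
  have hm1 : 1 ≤ m := by omega
  nlinarith [hblock, hIH, hlogm]


/-- Block estimate: the sum of `1/p` over primes in `(Y, Y²]` is bounded by 8. -/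
lemma blockC (Y : ℝ) (n : ℕ) (hY : 2 ≤ Y) (hn : (n:ℝ) ≤ Y ^ 2) :
    ∑ p ∈ (range (n + 1)).filter (fun p => Nat.Prime p ∧ Y < (p:ℝ)), 1 / (p:ℝ) ≤ 8 := by
  have hlogY : 0 < Real.log Y := Real.log_pos (by linarith)
  have h1 : ∑ p ∈ (range (n + 1)).filter (fun p => Nat.Prime p ∧ Y < (p:ℝ)), 1 / (p:ℝ)
      ≤ ∑ p ∈ (range (n + 1)).filter (fun p => Nat.Prime p ∧ Y < (p:ℝ)),
        (Real.log p / p) / Real.log Y := by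
    apply Finset.sum_le_sum
    intro p hp
    simp only [Finset.mem_filter] at hp
    have hp0 : (0:ℝ) < p := by exact_mod_cast hp.2.1.pos
    have hlogp : Real.log Y ≤ Real.log p := Real.log_le_log (by linarith) hp.2.2.le
    rw [div_div, le_div_iff₀ (by positivity), one_div, inv_mul_eq_div, mul_comm,
      mul_div_assoc, div_self hp0.ne', mul_one]
    exact hlogp
  refine h1.trans ?_
  rw [← Finset.sum_div]
  have h2 : ∑ p ∈ (range (n + 1)).filter (fun p => Nat.Prime p ∧ Y < (p:ℝ)),
      Real.log p / p ≤ 4 * Real.log n := by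
    refine le_trans ?_ (mertens1 n)
    apply Finset.sum_le_sum_of_subset_of_nonneg
    · intro x hx
      simp only [Finset.mem_filter] at hx ⊢
      exact ⟨hx.1, hx.2.1⟩
    · intro p hp _
      simp only [Finset.mem_filter] at hp
      have hp1 : (1:ℝ) ≤ p := by exact_mod_cast hp.2.one_lt.le
      positivity
  have h3 : Real.log n ≤ 2 * Real.log Y := by
    rcases Nat.eq_zero_or_pos n with h | h
    · simp [h]; positivity
    · calc Real.log n ≤ Real.log (Y ^ 2) := Real.log_le_log (by exact_mod_cast h) hn
        _ = 2 * Real.log Y := by rw [Real.log_pow]; push_cast; ring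
  rw [div_le_iff₀ hlogY]
  nlinarith


/-- Tail estimate, finite version. -/
lemma tailFin (X : ℝ) (hX : 2 ≤ X) (K : ℕ) :
    ∀ n : ℕ, (n:ℝ) ≤ X ^ (2 ^ K) →
    ∑ p ∈ (range (n + 1)).filter (fun p => Nat.Prime p ∧ X < (p:ℝ)),
      (p:ℝ) ^ (-(1 + 1 / Real.log X)) ≤ 8 * ∑ k ∈ range K, ((2:ℝ)⁻¹) ^ (k + 1) := by
  have hX1 : (1:ℝ) ≤ X := by linarith
  have hlogX : 0 < Real.log X := Real.log_pos (by linarith)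
  set ε : ℝ := 1 / Real.log X with hε
  have hε0 : 0 < ε := by positivity
  induction K with
  | zero =>
    intro n hn
    have he : (range (n + 1)).filter (fun p => Nat.Prime p ∧ X < (p:ℝ)) = ∅ := by
      rw [Finset.filter_eq_empty_iff]
      intro p hp
      simp only [Finset.mem_range] at hp
      rintro ⟨-, hXp⟩
      have : (p:ℝ) ≤ n := by exact_mod_cast Nat.lt_succ_iff.mp hp
      simp only [pow_zero, pow_one] at hn
      linarith
    simp [he]
  | succ K ih =>
    intro n hn
    set Y : ℝ := X ^ (2 ^ K) with hY
    have hY2 : 2 ≤ Y := le_trans hX (le_self_pow₀ hX1 (by positivity))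
    have hY0 : (0:ℝ) < Y := by linarith
    have hlogY : Real.log Y = (2:ℝ) ^ K * Real.log X := by
      rw [hY, Real.log_pow]; push_cast; ring
    set m : ℕ := ⌊Y⌋₊ with hm
    set A := (range (n + 1)).filter (fun p => Nat.Prime p ∧ X < (p:ℝ)) with hA
    have hsplit := Finset.sum_filter_add_sum_filter_not A (fun p => p ≤ m)
      (fun p => (p:ℝ) ^ (-(1 + ε)))
    rw [← hsplit]
    -- part 1
    have hpart1 : ∑ p ∈ A.filter (fun p => p ≤ m), (p:ℝ) ^ (-(1 + ε))
        ≤ 8 * ∑ k ∈ range K, ((2:ℝ)⁻¹) ^ (k + 1) := by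
      refine le_trans ?_ (ih m (Nat.floor_le hY0.le))
      apply Finset.sum_le_sum_of_subset_of_nonneg
      · intro p hp
        simp only [hA, Finset.mem_filter, Finset.mem_range] at hp ⊢
        exact ⟨Nat.lt_succ_of_le hp.2, hp.1.2⟩
      · intro p _ _
        positivity
    -- part 2
    have hpart2 : ∑ p ∈ A.filter (fun p => ¬ p ≤ m), (p:ℝ) ^ (-(1 + ε))
        ≤ 8 * ((2:ℝ)⁻¹) ^ (K + 1) := by
      have hstep : ∀ p ∈ A.filter (fun p => ¬ p ≤ m),
          (p:ℝ) ^ (-(1 + ε)) ≤ ((2:ℝ)⁻¹) ^ (K + 1) * (1 / p) := by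
        intro p hp
        simp only [hA, Finset.mem_filter, Finset.mem_range, not_le] at hp
        obtain ⟨⟨hpn, hprime, hXp⟩, hmp⟩ := hp
        have hp0 : (0:ℝ) < p := by exact_mod_cast hprime.pos
        have hYp : Y < p := by
          calc Y < m + 1 := Nat.lt_floor_add_one Y
            _ ≤ p := by exact_mod_cast hmp
        have h1 : (p:ℝ) ^ (-(1 + ε)) = (1 / p) * Real.exp (-(ε * Real.log p)) := by
          rw [show -(1 + ε) = -1 + -ε by ring, Real.rpow_add hp0, Real.rpow_neg_one,
            Real.rpow_def_of_pos hp0]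
          ring_nf
        rw [h1, mul_comm]
        apply mul_le_mul_of_nonneg_right _ (by positivity)
        have h2 : Real.exp (-(ε * Real.log p)) ≤ Real.exp (-(2:ℝ) ^ K) := by
          apply Real.exp_le_exp.mpr
          have hlogp : Real.log Y ≤ Real.log p := Real.log_le_log hY0 hYp.le
          have : (2:ℝ) ^ K = ε * Real.log Y := by
            rw [hlogY, hε]; field_simp
          rw [this]
          have := mul_le_mul_of_nonneg_left hlogp hε0.le
          linarith
        refine h2.trans ?_
        have h3 : Real.exp (-(2:ℝ) ^ K) ≤ Real.exp (-(K + 1 : ℝ)) := by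
          apply Real.exp_le_exp.mpr
          have : (K:ℝ) + 1 ≤ (2:ℝ) ^ K := by exact_mod_cast Nat.lt_two_pow_self (n := K)
          linarith
        refine h3.trans ?_
        have h4 : Real.exp (-(K + 1 : ℝ)) = Real.exp (-1) ^ (K + 1) := by
          rw [← Real.exp_nat_mul]; norm_num
        rw [h4]
        apply pow_le_pow_left₀ (Real.exp_nonneg _)
        rw [Real.exp_neg]
        rw [inv_le_inv₀ (Real.exp_pos 1) (by norm_num)]
        have := Real.exp_one_gt_d9
        linarith
      refine (Finset.sum_le_sum hstep).trans ?_
      rw [← Finset.mul_sum, mul_comm]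
      apply mul_le_mul_of_nonneg_right _ (by positivity)
      refine le_trans ?_ (blockC Y n hY2 ?_)
      · apply Finset.sum_le_sum_of_subset_of_nonneg
        · intro p hp
          simp only [hA, Finset.mem_filter, Finset.mem_range, not_le] at hp ⊢
          refine ⟨hp.1.1, hp.1.2.1, ?_⟩
          calc Y < m + 1 := Nat.lt_floor_add_one Y
            _ ≤ p := by exact_mod_cast hp.2
        · intro p hp _
          positivity
      · rw [hY, ← pow_mul]
        have : 2 ^ K * 2 = 2 ^ (K + 1) := by ring
        rw [this]
        exact hn
    rw [Finset.sum_range_succ]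
    linarith

lemma re_cpow_eq (n : ℕ) (hn : 0 < n) (s : ℂ) :
    ((n:ℂ) ^ (-s)).re = Real.cos (s.im * Real.log n) * (n:ℝ) ^ (-s.re) := by
  have hn0 : (0:ℝ) < (n:ℝ) := by exact_mod_cast hn
  rw [show ((n:ℂ)) = (((n:ℝ):ℂ)) by push_cast; rfl,
    Complex.cpow_def_of_ne_zero (by exact_mod_cast hn0.ne'),
    ← Complex.ofReal_log hn0.le, Complex.exp_re]
  have hre : ((Real.log n : ℂ) * (-s)).re = Real.log n * (-s.re) := by
    rw [Complex.re_ofReal_mul, Complex.neg_re]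
  have him : ((Real.log n : ℂ) * (-s)).im = Real.log n * (-s.im) := by
    rw [Complex.im_ofReal_mul, Complex.neg_im]
  rw [hre, him, Real.rpow_def_of_pos hn0]
  rw [show Real.log n * (-s.im) = -(s.im * Real.log n) by ring, Real.cos_neg]
  ring

lemma norm_cpow_eq (n : ℕ) (hn : 0 < n) (s : ℂ) :
    ‖(n:ℂ) ^ (-s)‖ = (n:ℝ) ^ (-s.re) := by
  have hn0 : (0:ℝ) < (n:ℝ) := by exact_mod_cast hn
  rw [show ((n:ℂ)) = (((n:ℝ):ℂ)) by push_cast; rfl, Complex.norm_cpow_eq_rpow_re_of_pos hn0, Complex.neg_re]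

/-- error term bound for the log of an Euler factor -/
lemma err_bound {z : ℂ} (hz : ‖z‖ ≤ 1/2) :
    |(-Complex.log (1 - z)).re - z.re| ≤ ‖z‖ ^ 2 := by
  have hz1 : ‖z‖ < 1 := by linarith
  have hslit : (1 - z).arg ≠ Real.pi := by
    apply Complex.slitPlane_arg_ne_pi
    rw [Complex.mem_slitPlane_iff]
    left
    have : |z.re| ≤ ‖z‖ := Complex.abs_re_le_norm z
    have : z.re ≤ 1/2 := by cases abs_le.mp this; linarith
    simp only [Complex.sub_re, Complex.one_re]
    linarith
  have heq : -Complex.log (1 - z) = Complex.log (1 - z)⁻¹ := by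
    rw [Complex.log_inv _ hslit]
  calc |(-Complex.log (1 - z)).re - z.re| = |((Complex.log (1-z)⁻¹ - z)).re| := by
        rw [heq]; congr 1
      _ ≤ ‖Complex.log (1-z)⁻¹ - z‖ := Complex.abs_re_le_norm _
      _ ≤ ‖z‖ ^ 2 * (1 - ‖z‖)⁻¹ / 2 := Complex.norm_log_one_sub_inv_sub_self_le hz1
      _ ≤ ‖z‖ ^ 2 := by
        have h2 : (1 - ‖z‖)⁻¹ ≤ 2 := by
          rw [inv_le_iff_one_le_mul₀ (by linarith)]
          linarith
        nlinarith [sq_nonneg ‖z‖, norm_nonneg z]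


set_option maxHeartbeats 1000000 in
/-- `∑_{p ≤ X} cos(δ log p)/p = log|ζ(1 + 1/log X + iδ)| + O(1)` with an absolute constant. -/
theorem stmt2 : ∃ C > 0, ∀ (δ X : ℝ), 2 ≤ X →
    |(∑ p ∈ (Finset.range (⌊X⌋₊ + 1)).filter Nat.Prime,
        Real.cos (δ * Real.log p) / p)
      - Real.log ‖riemannZeta (1 + 1 / Real.log X + Complex.I * δ)‖| ≤ C := by
  refine ⟨16, by norm_num, ?_⟩
  intro δ X hX
  have hlogX : 0 < Real.log X := Real.log_pos (by linarith)
  set ε : ℝ := 1 / Real.log X with hε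
  have hε0 : 0 < ε := by positivity
  set s : ℂ := 1 + 1 / Real.log X + Complex.I * δ with hs
  have hsre : s.re = 1 + ε := by
    simp [hs, hε, Complex.add_re, Complex.one_re, Complex.div_re, Complex.mul_re]
  have hsim : s.im = δ := by
    simp [hs, Complex.add_im, Complex.mul_im]
  have hs1 : 1 < s.re := by rw [hsre]; linarith
  -- basic facts about primes
  have hprime_norm : ∀ p : Nat.Primes, ‖(p:ℂ) ^ (-s)‖ = ((p:ℕ):ℝ) ^ (-(1+ε)) := by
    intro p
    rw [norm_cpow_eq (p:ℕ) p.prop.pos, hsre]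
  -- summability
  have hsum_rpow : Summable (fun p : Nat.Primes => ((p:ℕ):ℝ) ^ (-(1+ε))) :=
    Nat.Primes.summable_rpow.mpr (by linarith)
  have hsum_norm : Summable (fun p : Nat.Primes => ‖(p:ℂ) ^ (-s)‖) := by
    refine hsum_rpow.congr fun p => ?_
    rw [hprime_norm]
  have hzsum : Summable (fun p : Nat.Primes => (p:ℂ) ^ (-s)) := hsum_norm.of_norm
  have hlog_sum : Summable (fun p : Nat.Primes => -Complex.log (1 - (p:ℂ) ^ (-s))) :=
    hzsum.clog_one_sub.neg
  have ha_sum : Summable (fun p : Nat.Primes => ((p:ℂ) ^ (-s)).re) :=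
    (Complex.hasSum_re hzsum.hasSum).summable
  have hre_log_sum : Summable (fun p : Nat.Primes => (-Complex.log (1 - (p:ℂ) ^ (-s))).re) :=
    (Complex.hasSum_re hlog_sum.hasSum).summable
  have hr_sum : Summable (fun p : Nat.Primes =>
      (-Complex.log (1 - (p:ℂ) ^ (-s))).re - ((p:ℂ) ^ (-s)).re) := hre_log_sum.sub ha_sum
  -- Euler product
  have hzeta := riemannZeta_eulerProduct_exp_log hs1
  have hL : Real.log ‖riemannZeta s‖
      = ∑' p : Nat.Primes, (-Complex.log (1 - (p:ℂ) ^ (-s))).re := by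
    rw [← hzeta, Complex.norm_exp, Real.log_exp, Complex.re_tsum hlog_sum]
  -- error term
  have hz_half : ∀ p : Nat.Primes, ‖(p:ℂ) ^ (-s)‖ ≤ 1/2 := by
    intro p
    rw [hprime_norm]
    have hp2 : (2:ℝ) ≤ ((p:ℕ):ℝ) := by exact_mod_cast p.prop.two_le
    calc ((p:ℕ):ℝ) ^ (-(1+ε)) ≤ ((p:ℕ):ℝ) ^ (-1:ℝ) := by
          apply Real.rpow_le_rpow_of_exponent_le (by linarith) (by linarith)
      _ = (((p:ℕ):ℝ))⁻¹ := Real.rpow_neg_one _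
      _ ≤ 1/2 := by
          rw [one_div]
          exact inv_anti₀ (by norm_num) hp2
  have hr_bound : ∀ p : Nat.Primes,
      |(-Complex.log (1 - (p:ℂ) ^ (-s))).re - ((p:ℂ) ^ (-s)).re|
        ≤ (((p:ℕ):ℝ))⁻¹ ^ 2 := by
    intro p
    refine (err_bound (hz_half p)).trans ?_
    have hp2 : (2:ℝ) ≤ ((p:ℕ):ℝ) := by exact_mod_cast p.prop.two_le
    have : ‖(p:ℂ) ^ (-s)‖ ≤ (((p:ℕ):ℝ))⁻¹ := by
      rw [hprime_norm, ← Real.rpow_neg_one]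
      apply Real.rpow_le_rpow_of_exponent_le (by linarith) (by linarith)
    exact pow_le_pow_left₀ (norm_nonneg _) this 2
  have hsum_inv_sq : Summable (fun p : Nat.Primes => (((p:ℕ):ℝ))⁻¹ ^ 2) := by
    refine (Nat.Primes.summable_rpow.mpr (by norm_num : (-2:ℝ) < -1)).congr fun p => ?_
    rw [show ((-2:ℝ)) = -(2:ℕ) by push_cast; ring]
    rw [Real.rpow_neg (by positivity), Real.rpow_natCast, inv_pow]
  have hr_abs_sum : Summable (fun p : Nat.Primes =>
      |(-Complex.log (1 - (p:ℂ) ^ (-s))).re - ((p:ℂ) ^ (-s)).re|) := hr_sum.abs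
  have hR : |∑' p : Nat.Primes,
      ((-Complex.log (1 - (p:ℂ) ^ (-s))).re - ((p:ℂ) ^ (-s)).re)| ≤ 3 := by
    calc |∑' p : Nat.Primes, ((-Complex.log (1 - (p:ℂ) ^ (-s))).re - ((p:ℂ) ^ (-s)).re)|
        ≤ ∑' p : Nat.Primes, |(-Complex.log (1 - (p:ℂ) ^ (-s))).re - ((p:ℂ) ^ (-s)).re| := by
          simpa only [Real.norm_eq_abs] using norm_tsum_le_tsum_norm
            (hr_abs_sum.congr fun p => (Real.norm_eq_abs _).symm)
      _ ≤ ∑' p : Nat.Primes, (((p:ℕ):ℝ))⁻¹ ^ 2 := Summable.tsum_le_tsum hr_bound hr_abs_sum hsum_inv_sq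
      _ ≤ ∑' n : ℕ, (1:ℝ) / (n:ℝ) ^ 2 := by
          apply Summable.tsum_le_tsum_of_inj (fun p : Nat.Primes => (p:ℕ))
            Nat.Primes.coe_nat_injective
            (fun n _ => by positivity)
            (fun p => by rw [one_div, inv_pow])
            hsum_inv_sq hasSum_zeta_two.summable
      _ = Real.pi ^ 2 / 6 := hasSum_zeta_two.tsum_eq
      _ ≤ 3 := by nlinarith [Real.pi_le_four, Real.pi_pos]
  -- split tsum of re parts
  have hsplit_terms : (fun p : Nat.Primes => (-Complex.log (1 - (p:ℂ) ^ (-s))).re)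
      = (fun p : Nat.Primes => ((p:ℂ) ^ (-s)).re
        + ((-Complex.log (1 - (p:ℂ) ^ (-s))).re - ((p:ℂ) ^ (-s)).re)) := by
    funext p; ring
  have htsum_split : ∑' p : Nat.Primes, (-Complex.log (1 - (p:ℂ) ^ (-s))).re
      = (∑' p : Nat.Primes, ((p:ℂ) ^ (-s)).re)
        + ∑' p : Nat.Primes, ((-Complex.log (1 - (p:ℂ) ^ (-s))).re - ((p:ℂ) ^ (-s)).re) := by
    rw [hsplit_terms, Summable.tsum_add ha_sum hr_sum]
  -- the finite set of primes up to X, as a finset of Nat.Primes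
  set F : Finset ℕ := (Finset.range (⌊X⌋₊ + 1)).filter Nat.Prime with hF
  set Fp : Finset Nat.Primes := F.attach.map
    ⟨fun x => (⟨x.1, (Finset.mem_filter.mp x.2).2⟩ : Nat.Primes),
     by intro a b h; injection h with h'; exact Subtype.ext h'⟩ with hFp
  have hFpmem : ∀ q : Nat.Primes, q ∈ Fp ↔ (q:ℕ) ∈ F := by
    intro q
    constructor
    · rintro hq
      rw [hFp, Finset.mem_map] at hq
      obtain ⟨x, -, rfl⟩ := hq
      exact x.2
    · intro hq
      rw [hFp, Finset.mem_map]
      exact ⟨⟨(q:ℕ), hq⟩, Finset.mem_attach _ _, rfl⟩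
  have hFpnotmem : ∀ q : Nat.Primes, q ∉ Fp ↔ X < ((q:ℕ):ℝ) := by
    intro q
    rw [hFpmem, hF, Finset.mem_filter, Finset.mem_range]
    constructor
    · intro h
      have h2 : ¬ (q:ℕ) < ⌊X⌋₊ + 1 := fun hlt => h ⟨hlt, q.prop⟩
      push_neg at h2
      calc X < ⌊X⌋₊ + 1 := Nat.lt_floor_add_one X
        _ ≤ ((q:ℕ):ℝ) := by exact_mod_cast h2
    · intro h hmem
      have : (q:ℕ) ≤ ⌊X⌋₊ := Nat.lt_succ_iff.mp hmem.1
      have : ((q:ℕ):ℝ) ≤ X := by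
        refine le_trans ?_ (Nat.floor_le (by linarith : (0:ℝ) ≤ X))
        exact_mod_cast this
      linarith
  have hsum_Fp : ∀ (g : ℕ → ℝ), ∑ p ∈ Fp, g (p:ℕ) = ∑ n ∈ F, g n := by
    intro g
    rw [hFp, Finset.sum_map]
    exact Finset.sum_attach F (fun n => g n)
  -- split the tsum of re parts at Fp
  have htsum_a := (Summable.sum_add_tsum_compl (s := Fp) ha_sum).symm
  -- head sum identification
  have hB : ∑ p ∈ Fp, ((p:ℂ) ^ (-s)).re
      = ∑ n ∈ F, Real.cos (δ * Real.log n) * (n:ℝ) ^ (-(1+ε)) := by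
    rw [show (fun p : Nat.Primes => ((p:ℂ) ^ (-s)).re)
        = (fun p : Nat.Primes => Real.cos (δ * Real.log (p:ℕ)) * ((p:ℕ):ℝ) ^ (-(1+ε))) from ?_]
    · exact hsum_Fp (fun n => Real.cos (δ * Real.log n) * (n:ℝ) ^ (-(1+ε)))
    · funext p
      rw [re_cpow_eq (p:ℕ) p.prop.pos, hsim, hsre]
  -- tail bound
  have hsub_rpow : Summable (fun q : ↑((↑Fp : Set Nat.Primes)ᶜ) =>
      (((q : Nat.Primes) : ℕ):ℝ) ^ (-(1+ε))) := hsum_rpow.subtype _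
  have hsub_a : Summable (fun q : ↑((↑Fp : Set Nat.Primes)ᶜ) =>
      (((q : Nat.Primes) : ℂ) ^ (-s)).re) := ha_sum.subtype _
  have hgeom : ∀ K : ℕ, ∑ k ∈ range K, ((2:ℝ)⁻¹) ^ (k + 1) ≤ 1 := by
    intro K
    have h1 : ∑ k ∈ range K, ((2:ℝ)⁻¹) ^ (k + 1) = 2⁻¹ * ∑ k ∈ range K, ((2:ℝ)⁻¹) ^ k := by
      rw [Finset.mul_sum]
      exact Finset.sum_congr rfl fun k _ => by rw [pow_succ']
    rw [h1]
    have h2 : ∑ k ∈ range K, ((2:ℝ)⁻¹) ^ k ≤ 2 := by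
      have := sum_geometric_two_le K
      simpa [one_div] using this
    linarith
  have htail2 : ∑' q : ↑((↑Fp : Set Nat.Primes)ᶜ), (((q : Nat.Primes) : ℕ):ℝ) ^ (-(1+ε)) ≤ 8 := by
    apply Summable.tsum_le_of_sum_le hsub_rpow
    intro G
    classical
    set e : ↑((↑Fp : Set Nat.Primes)ᶜ) → ℕ := fun q => ((q : Nat.Primes) : ℕ) with he
    set N : ℕ := G.sup e with hN
    have hinj : ∀ a ∈ G, ∀ b ∈ G, e a = e b → a = b := by
      intro a _ b _ h
      exact Subtype.ext (Nat.Primes.coe_nat_injective h)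
    have h1 : ∑ q ∈ G, ((e q : ℝ)) ^ (-(1+ε)) = ∑ m ∈ G.image e, (m:ℝ) ^ (-(1+ε)) :=
      (Finset.sum_image (f := fun m : ℕ => (m:ℝ) ^ (-(1+ε))) (g := e) hinj).symm
    have hsubset : G.image e ⊆ (range (N+1)).filter (fun p => Nat.Prime p ∧ X < (p:ℝ)) := by
      intro m hm
      rw [Finset.mem_image] at hm
      obtain ⟨q, hq, rfl⟩ := hm
      rw [Finset.mem_filter, Finset.mem_range]
      refine ⟨Nat.lt_succ_of_le (Finset.le_sup hq), (q : Nat.Primes).prop, ?_⟩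
      have hq2 : (q : Nat.Primes) ∉ Fp := by
        have h := q.2
        simp only [Set.mem_compl_iff, Finset.mem_coe] at h
        exact h
      exact (hFpnotmem _).mp hq2
    have hNX : ((N:ℕ):ℝ) ≤ X ^ (2 ^ N) := by
      calc ((N:ℕ):ℝ) ≤ (2:ℝ) ^ N := by exact_mod_cast (Nat.lt_two_pow_self (n := N)).le
        _ ≤ (2:ℝ) ^ (2 ^ N) := by
            apply pow_le_pow_right₀ (by norm_num)
            exact (Nat.lt_two_pow_self (n := N)).le
        _ ≤ X ^ (2 ^ N) := by
            apply pow_le_pow_left₀ (by norm_num) hX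
    calc ∑ q ∈ G, (((q : Nat.Primes) : ℕ):ℝ) ^ (-(1+ε))
        = ∑ m ∈ G.image e, (m:ℝ) ^ (-(1+ε)) := h1
      _ ≤ ∑ m ∈ (range (N+1)).filter (fun p => Nat.Prime p ∧ X < (p:ℝ)), (m:ℝ) ^ (-(1+ε)) := by
          apply Finset.sum_le_sum_of_subset_of_nonneg hsubset
          intro m _ _
          positivity
      _ ≤ 8 * ∑ k ∈ range N, ((2:ℝ)⁻¹) ^ (k + 1) := by
          have := tailFin X hX N N hNX
          simpa [hε] using this
      _ ≤ 8 := by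
          have := hgeom N
          linarith
  have htail : |∑' q : ↑((↑Fp : Set Nat.Primes)ᶜ), (((q : Nat.Primes) : ℂ) ^ (-s)).re| ≤ 8 := by
    calc |∑' q : ↑((↑Fp : Set Nat.Primes)ᶜ), (((q : Nat.Primes) : ℂ) ^ (-s)).re|
        ≤ ∑' q : ↑((↑Fp : Set Nat.Primes)ᶜ), |(((q : Nat.Primes) : ℂ) ^ (-s)).re| := by
          simpa only [Real.norm_eq_abs] using norm_tsum_le_tsum_norm
            (hsub_a.abs.congr fun q => (Real.norm_eq_abs _).symm)
      _ ≤ ∑' q : ↑((↑Fp : Set Nat.Primes)ᶜ), (((q : Nat.Primes) : ℕ):ℝ) ^ (-(1+ε)) := by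
          apply Summable.tsum_le_tsum _ hsub_a.abs hsub_rpow
          intro q
          calc |(((q : Nat.Primes) : ℂ) ^ (-s)).re| ≤ ‖((q : Nat.Primes) : ℂ) ^ (-s)‖ :=
                Complex.abs_re_le_norm _
            _ = (((q : Nat.Primes) : ℕ):ℝ) ^ (-(1+ε)) := hprime_norm _
      _ ≤ 8 := htail2
  -- head bound
  have hfloor2 : (2:ℕ) ≤ ⌊X⌋₊ := Nat.le_floor (by exact_mod_cast hX)
  have hhead : |(∑ n ∈ F, Real.cos (δ * Real.log n) / n)
      - ∑ n ∈ F, Real.cos (δ * Real.log n) * (n:ℝ) ^ (-(1+ε))| ≤ 4 := by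
    rw [← Finset.sum_sub_distrib]
    refine (Finset.abs_sum_le_sum_abs _ _).trans ?_
    have hterm : ∀ n ∈ F, |Real.cos (δ * Real.log n) / n
        - Real.cos (δ * Real.log n) * (n:ℝ) ^ (-(1+ε))| ≤ ε * (Real.log n / n) := by
      intro n hn
      rw [hF, Finset.mem_filter] at hn
      have hn2 : (2:ℝ) ≤ (n:ℝ) := by exact_mod_cast hn.2.two_le
      have hn0 : (0:ℝ) < n := by linarith
      have hlogn : 0 ≤ Real.log n := Real.log_nonneg (by linarith)
      have hkey : (n:ℝ) ^ (-(1+ε)) = (1/n) * Real.exp (-(ε * Real.log n)) := by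
        rw [show -(1 + ε) = -1 + -ε by ring, Real.rpow_add hn0, Real.rpow_neg_one,
          Real.rpow_def_of_pos hn0]
        ring_nf
      have hfac : Real.cos (δ * Real.log n) / n
          - Real.cos (δ * Real.log n) * (n:ℝ) ^ (-(1+ε))
          = Real.cos (δ * Real.log n) * (1/n - (n:ℝ) ^ (-(1+ε))) := by ring
      rw [hfac, abs_mul]
      have hnonneg : 0 ≤ 1/(n:ℝ) - (n:ℝ) ^ (-(1+ε)) := by
        rw [hkey]
        have : Real.exp (-(ε * Real.log n)) ≤ 1 := by
          rw [Real.exp_le_one_iff]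
          exact neg_nonpos.mpr (mul_nonneg hε0.le hlogn)
        nlinarith [one_div_pos.mpr hn0]
      have hub : 1/(n:ℝ) - (n:ℝ) ^ (-(1+ε)) ≤ ε * (Real.log n / n) := by
        rw [hkey]
        have h1 : 1 - Real.exp (-(ε * Real.log n)) ≤ ε * Real.log n := by
          have := Real.add_one_le_exp (-(ε * Real.log n))
          linarith
        have h2 : 1/(n:ℝ) - 1/n * Real.exp (-(ε * Real.log n))
            = (1/n) * (1 - Real.exp (-(ε * Real.log n))) := by ring
        rw [h2]
        calc (1/(n:ℝ)) * (1 - Real.exp (-(ε * Real.log n)))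
            ≤ (1/(n:ℝ)) * (ε * Real.log n) := by
              apply mul_le_mul_of_nonneg_left h1 (by positivity)
          _ = ε * (Real.log n / n) := by ring
      calc |Real.cos (δ * Real.log n)| * |1/(n:ℝ) - (n:ℝ) ^ (-(1+ε))|
          ≤ 1 * |1/(n:ℝ) - (n:ℝ) ^ (-(1+ε))| := by
            apply mul_le_mul_of_nonneg_right (Real.abs_cos_le_one _) (abs_nonneg _)
        _ = |1/(n:ℝ) - (n:ℝ) ^ (-(1+ε))| := one_mul _
        _ = 1/(n:ℝ) - (n:ℝ) ^ (-(1+ε)) := abs_of_nonneg hnonneg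
        _ ≤ ε * (Real.log n / n) := hub
    refine (Finset.sum_le_sum hterm).trans ?_
    rw [← Finset.mul_sum]
    have hM := mertens1 ⌊X⌋₊
    have hlogfloor : Real.log (⌊X⌋₊:ℝ) ≤ Real.log X := by
      apply Real.log_le_log (by exact_mod_cast Nat.lt_of_lt_of_le Nat.zero_lt_two hfloor2)
      exact Nat.floor_le (by linarith)
    calc ε * ∑ n ∈ F, Real.log n / n ≤ ε * (4 * Real.log ⌊X⌋₊) := by
          apply mul_le_mul_of_nonneg_left _ hε0.le
          rw [hF]
          exact hM
      _ ≤ ε * (4 * Real.log X) := by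
          apply mul_le_mul_of_nonneg_left _ hε0.le
          linarith
      _ = 4 := by
          rw [hε]
          field_simp
  -- final assembly
  rw [hL, htsum_split, htsum_a, hB]
  set A := ∑ n ∈ F, Real.cos (δ * Real.log n) / n with hA
  set B := ∑ n ∈ F, Real.cos (δ * Real.log n) * (n:ℝ) ^ (-(1+ε)) with hBdef
  set T := ∑' q : ↑((↑Fp : Set Nat.Primes)ᶜ), (((q : Nat.Primes) : ℂ) ^ (-s)).re with hT
  set R := ∑' p : Nat.Primes, ((-Complex.log (1 - (p:ℂ) ^ (-s))).re - ((p:ℂ) ^ (-s)).re)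
    with hR2
  have heq : A - (B + T + R) = (A - B) + (-T) + (-R) := by ring
  calc |A - (B + T + R)| = |(A - B) + (-T) + (-R)| := by rw [heq]
    _ ≤ |(A - B) + (-T)| + |(-R)| := abs_add_le _ _
    _ ≤ |A - B| + |(-T)| + |(-R)| := by
        have := abs_add_le (A - B) (-T)
        linarith
    _ ≤ 4 + 8 + 3 := by
        rw [abs_neg, abs_neg]
        have h1 : |A - B| ≤ 4 := hhead
        have h2 : |T| ≤ 8 := htail
        have h3 : |R| ≤ 3 := hR
        linarith
    _ ≤ 16 := by norm_num
end

section
/- Let k, N be natural numbers with N^k ≤ T / log T, T ≥ 3, and let a : primes → ℂ. Then ∫_T^{2T} |∑_{p ≤ N} a_p p^{-it}|^{2k} dt ≪ T · k! · (∑_{p ≤ N} |a_p|^2)^k, with an absolute implied constant. -/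
open Finset intervalIntegral



lemma aux_perm_exists {k : ℕ} {f g : Fin k → ℕ}
    (h : (List.ofFn f).Perm (List.ofFn g)) : ∃ σ : Equiv.Perm (Fin k), g = f ∘ σ := by
  have h1 : (f ∘ Tuple.sort f) = (g ∘ Tuple.sort g) := by
    apply List.ofFn_injective
    exact (fun h a b => List.Perm.eq_of_sortedLE a b h)
      ((Equiv.Perm.ofFn_comp_perm (Tuple.sort f) f).trans
        (h.trans (Equiv.Perm.ofFn_comp_perm (Tuple.sort g) g).symm))
      (Tuple.monotone_sort f).sortedLE_ofFn (Tuple.monotone_sort g).sortedLE_ofFn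
  refine ⟨(Tuple.sort g).symm.trans (Tuple.sort f), ?_⟩
  funext i
  have h2 := congrFun h1 ((Tuple.sort g).symm i)
  simp only [Function.comp_apply, Equiv.apply_symm_apply] at h2
  simpa using h2.symm

lemma perm_of_prod_eq {k : ℕ} {f g : Fin k → ℕ} (hf : ∀ i, (f i).Prime) (hg : ∀ i, (g i).Prime)
    (h : ∏ i, f i = ∏ i, g i) : ∃ σ : Equiv.Perm (Fin k), g = f ∘ σ := by
  apply aux_perm_exists
  have h1 := Nat.primeFactorsList_unique (n := ∏ i, f i) (l := List.ofFn f)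
    (by rw [List.prod_ofFn]) (by simp only [List.mem_ofFn]; rintro p ⟨i, rfl⟩; exact hf i)
  have h2 := Nat.primeFactorsList_unique (n := ∏ i, f i) (l := List.ofFn g)
    (by rw [List.prod_ofFn]; exact h.symm)
    (by simp only [List.mem_ofFn]; rintro p ⟨i, rfl⟩; exact hg i)
  exact h1.trans h2.symm

lemma fiber_card_le {k : ℕ} (P : Finset ℕ) (hP : ∀ p ∈ P, Nat.Prime p) (n : ℕ) :
    ((Fintype.piFinset fun _ : Fin k => P).filter (fun g => ∏ i, g i = n)).card
      ≤ k.factorial := by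
  set s := (Fintype.piFinset fun _ : Fin k => P).filter (fun g => ∏ i, g i = n) with hs
  rcases s.eq_empty_or_nonempty with he | ⟨f₀, hf₀⟩
  · simp [he, Nat.factorial_pos k |>.le]
  have hmem : ∀ g ∈ s, (∀ i, (g i).Prime) ∧ ∏ i, g i = n := by
    intro g hg
    rw [hs, Finset.mem_filter] at hg
    exact ⟨fun i => hP _ (Fintype.mem_piFinset.mp hg.1 i), hg.2⟩
  have hex : ∀ g ∈ s, ∃ σ : Equiv.Perm (Fin k), g = f₀ ∘ σ := by
    intro g hg
    exact perm_of_prod_eq (hmem f₀ hf₀).1 (hmem g hg).1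
      (by rw [(hmem f₀ hf₀).2, (hmem g hg).2])
  choose σ hσ using hex
  have : s.card ≤ (Finset.univ : Finset (Equiv.Perm (Fin k))).card := by
    apply Finset.card_le_card_of_injOn
      (fun g => if hg : g ∈ s then σ g hg else 1) (fun _ _ => Finset.mem_univ _)
    intro g hg h hh heq
    simp only [Finset.mem_coe] at hg hh
    simp only [dif_pos hg, dif_pos hh] at heq
    rw [hσ g hg, hσ h hh, heq]
  simpa [Fintype.card_perm] using this



lemma cpow_eq_exp' (n : ℕ) (hn : 0 < n) (t : ℝ) :
    (n : ℂ) ^ (-(Complex.I * (t:ℂ))) = Complex.exp (Complex.I * t * (-(Real.log n))) := by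
  rw [Complex.cpow_def_of_ne_zero (by exact_mod_cast hn.ne')]
  congr 1
  have : Complex.log (n : ℂ) = (Real.log n : ℂ) := by
    rw [← Complex.ofReal_natCast, Complex.ofReal_log (by positivity)]
  rw [this]
  push_cast
  ring

lemma osc_bound (θ T : ℝ) (hθ : θ ≠ 0) :
    ‖∫ t in T..(2*T), Complex.exp (Complex.I * t * θ)‖ ≤ 2 / |θ| := by
  have hc : (Complex.I * (θ:ℂ)) ≠ 0 :=
    mul_ne_zero Complex.I_ne_zero (by exact_mod_cast hθ)
  have heq : ∀ t : ℝ, Complex.I * (t:ℂ) * (θ:ℂ) = (Complex.I * θ) * t := fun t => by ring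
  rw [show (fun t : ℝ => Complex.exp (Complex.I * (t:ℂ) * (θ:ℂ)))
      = fun t : ℝ => Complex.exp ((Complex.I * θ) * t) from funext fun t => by rw [heq]]
  rw [integral_exp_mul_complex hc, norm_div]
  have habs : ∀ s : ℝ, ‖Complex.exp (Complex.I * (θ:ℂ) * (s:ℂ))‖ = 1 := by
    intro s
    rw [show Complex.I * (θ:ℂ) * (s:ℂ) = ((θ * s : ℝ):ℂ) * Complex.I by push_cast; ring]
    exact Complex.norm_exp_ofReal_mul_I _
  have h1 : ‖Complex.exp (Complex.I * (θ:ℂ) * ((2*T : ℝ):ℂ))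
      - Complex.exp (Complex.I * (θ:ℂ) * ((T : ℝ):ℂ))‖ ≤ 2 := by
    calc _ ≤ _ := norm_sub_le _ _
    _ ≤ 2 := by rw [habs, habs]; norm_num
  have h2 : ‖Complex.I * (θ:ℂ)‖ = |θ| := by
    simp
  rw [h2]
  exact div_le_div_of_nonneg_right h1 (abs_pos.mpr hθ).le

lemma log_gap {m n M : ℕ} (hm : 1 ≤ m) (hn : 1 ≤ n) (hmM : m ≤ M) (hnM : n ≤ M)
    (hne : m ≠ n) : |(n:ℝ) - (m:ℝ)| / M ≤ |Real.log n - Real.log m| := by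
  have key : ∀ a b : ℕ, 1 ≤ a → b ≤ M → a < b →
      ((b:ℝ) - a) / M ≤ Real.log b - Real.log a := by
    intro a b ha hbM hab
    have ha' : (0:ℝ) < a := by exact_mod_cast ha
    have hb' : (0:ℝ) < b := ha'.trans (by exact_mod_cast hab)
    have hM' : (0:ℝ) < M := lt_of_lt_of_le hb' (by exact_mod_cast hbM)
    have h1 : Real.log ((a:ℝ)/b) ≤ (a:ℝ)/b - 1 :=
      Real.log_le_sub_one_of_pos (by positivity)
    have h2 : Real.log ((a:ℝ)/b) = Real.log a - Real.log b := Real.log_div ha'.ne' hb'.ne'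
    have h3 : ((b:ℝ) - a)/b ≤ Real.log b - Real.log a := by
      rw [h2] at h1
      have : (a:ℝ)/b - 1 = -(((b:ℝ) - a)/b) := by field_simp; ring
      linarith
    refine le_trans ?_ h3
    apply div_le_div_of_nonneg_left _ hb' _
    · have : (a:ℝ) < b := by exact_mod_cast hab
      linarith
    · exact_mod_cast hbM
  have hM' : (0:ℝ) < M := by
    have h0 : (0:ℝ) < m := by exact_mod_cast hm
    exact lt_of_lt_of_le h0 (by exact_mod_cast hmM)
  rcases lt_or_gt_of_ne hne with h | h
  · have hmn : (m:ℝ) < n := by exact_mod_cast h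
    have hk := key m n hm hnM h
    have hpos : (0:ℝ) < ((n:ℝ) - m) / M := div_pos (by linarith) hM'
    rw [abs_of_pos (by linarith), abs_of_pos (by linarith)]
    exact hk
  · have hk := key n m hn hmM h
    have hmn : (n:ℝ) < m := by exact_mod_cast h
    rw [abs_of_neg (by linarith), abs_of_neg (by
      have hpos : (0:ℝ) < ((m:ℝ) - n) / M := div_pos (by linarith) hM'
      linarith)]
    calc -((n:ℝ) - m) / M = ((m:ℝ) - n)/M := by ring
    _ ≤ Real.log m - Real.log n := hk
    _ = -(Real.log n - Real.log m) := by ring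



lemma harmonic_sum_le (M : ℕ) :
    ∑ d ∈ Finset.Icc 1 M, (1:ℝ)/d ≤ 1 + Real.log M := by
  have h2 : (harmonic M : ℝ) = ∑ d ∈ Finset.Icc 1 M, (1:ℝ)/d := by
    rw [harmonic_eq_sum_Icc]
    push_cast
    simp [one_div]
  rw [← h2]
  exact_mod_cast harmonic_le_one_add_log M

lemma sum_inv_gap_le (M m : ℕ) (hm1 : 1 ≤ m) (hmM : m ≤ M) :
    ∑ n ∈ (Finset.Icc 1 M).filter (· ≠ m), (1:ℝ)/|(m:ℝ) - (n:ℝ)|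
      ≤ 2*(1 + Real.log M) := by
  have key : ∀ (s : Finset ℕ) (e : ℕ → ℕ), Set.InjOn e s → (∀ n ∈ s, e n ∈ Finset.Icc 1 M) →
      (∀ n ∈ s, (1:ℝ)/|(m:ℝ) - (n:ℝ)| = 1/(e n)) →
      ∑ n ∈ s, (1:ℝ)/|(m:ℝ) - (n:ℝ)| ≤ ∑ d ∈ Finset.Icc 1 M, (1:ℝ)/d := by
    intro s e hinj hmap hval
    have himg : ∑ x ∈ s, (1:ℝ)/(e x) = ∑ d ∈ s.image e, (1:ℝ)/d :=
      (Finset.sum_image (g := e) (f := fun d : ℕ => (1:ℝ)/(d:ℝ)) (fun x hx y hy h => hinj hx hy h)).symm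
    rw [Finset.sum_congr rfl hval, himg]
    apply Finset.sum_le_sum_of_subset_of_nonneg
    · intro d hd
      obtain ⟨n, hn, rfl⟩ := Finset.mem_image.mp hd
      exact hmap n hn
    · intro d _ _
      positivity
  have hsplit : (Finset.Icc 1 M).filter (· ≠ m)
      = (Finset.Icc 1 M).filter (· < m) ∪ (Finset.Icc 1 M).filter (m < ·) := by
    ext n
    simp only [Finset.mem_filter, Finset.mem_union, Finset.mem_Icc]
    omega
  have hdisj : Disjoint ((Finset.Icc 1 M).filter (· < m)) ((Finset.Icc 1 M).filter (m < ·)) := by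
    rw [Finset.disjoint_left]
    intro n h1 h2
    simp only [Finset.mem_filter] at h1 h2
    omega
  rw [hsplit, Finset.sum_union hdisj]
  have hA := key ((Finset.Icc 1 M).filter (· < m)) (fun n => m - n)
    (by
      intro x hx y hy h
      simp only [Finset.coe_filter, Set.mem_setOf_eq, Finset.mem_Icc] at hx hy
      have h' : m - x = m - y := h
      omega)
    (by
      intro n hn
      simp only [Finset.mem_filter, Finset.mem_Icc] at hn ⊢
      omega)
    (by
      intro n hn
      simp only [Finset.mem_filter, Finset.mem_Icc] at hn
      rw [Nat.cast_sub (le_of_lt hn.2)]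
      rw [abs_of_pos (by
        have : (n:ℝ) < m := by exact_mod_cast hn.2
        linarith)])
  have hB := key ((Finset.Icc 1 M).filter (m < ·)) (fun n => n - m)
    (by
      intro x hx y hy h
      simp only [Finset.coe_filter, Set.mem_setOf_eq, Finset.mem_Icc] at hx hy
      have h' : x - m = y - m := h
      omega)
    (by
      intro n hn
      simp only [Finset.mem_filter, Finset.mem_Icc] at hn ⊢
      omega)
    (by
      intro n hn
      simp only [Finset.mem_filter, Finset.mem_Icc] at hn
      rw [Nat.cast_sub (le_of_lt hn.2)]
      rw [abs_of_neg (by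
        have : (m:ℝ) < n := by exact_mod_cast hn.2
        linarith)]
      ring_nf)
  have hh := harmonic_sum_le M
  linarith



lemma pair_term (w₁ w₂ : ℂ) (L₁ L₂ t : ℝ) :
    (w₁ * Complex.exp (Complex.I*t*(-L₁))) * (starRingEnd ℂ) (w₂ * Complex.exp (Complex.I*t*(-L₂)))
    = w₁ * (starRingEnd ℂ) w₂ * Complex.exp (Complex.I*t*Complex.ofReal (L₂ - L₁)) := by
  rw [map_mul, ← Complex.exp_conj]
  have h : (starRingEnd ℂ) (Complex.I*t*(-(L₂:ℂ))) = Complex.I*t*L₂ := by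
    simp only [map_mul, map_neg, Complex.conj_I, Complex.conj_ofReal]
    ring
  rw [h, mul_mul_mul_comm, ← Complex.exp_add]
  congr 1
  push_cast
  ring

lemma expand_pointwise (P : Finset ℕ) (hP : ∀ p ∈ P, 0 < p) (a : ℕ → ℂ) (k : ℕ) (t : ℝ) :
    (‖∑ p ∈ P, a p * (p:ℂ) ^ (-(Complex.I * (t:ℂ)))‖)^(2*k)
    = ∑ f ∈ (Fintype.piFinset fun _ : Fin k => P), ∑ g ∈ (Fintype.piFinset fun _ : Fin k => P),
        ((∏ i, a (f i)) * (starRingEnd ℂ) (∏ i, a (g i))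
          * Complex.exp (Complex.I * t *
              Complex.ofReal ((Real.log ((∏ i, g i : ℕ) : ℝ))
                - (Real.log ((∏ i, f i : ℕ) : ℝ))))).re := by
  set z := ∑ p ∈ P, a p * (p:ℂ) ^ (-(Complex.I * (t:ℂ))) with hzdef
  have hzk : z ^ k = ∑ f ∈ (Fintype.piFinset fun _ : Fin k => P),
      (∏ i, a (f i)) * Complex.exp (Complex.I * t * (-(Real.log ((∏ i, f i : ℕ) : ℝ)))) := by
    have h1 : z = ∑ p ∈ P, a p * Complex.exp (Complex.I*t*(-(Real.log p))) := by
      rw [hzdef]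
      exact Finset.sum_congr rfl fun p hp => by rw [cpow_eq_exp' p (hP p hp) t]
    rw [h1, show (∑ p ∈ P, a p * Complex.exp (Complex.I*t*(-(Real.log p)))) ^ k
        = ∏ _i : Fin k, (∑ p ∈ P, a p * Complex.exp (Complex.I*t*(-(Real.log p)))) by
      rw [Finset.prod_const, Finset.card_univ, Fintype.card_fin]]
    rw [Finset.prod_univ_sum]
    apply Finset.sum_congr rfl
    intro f hf
    rw [Finset.prod_mul_distrib]
    congr 1
    rw [← Complex.exp_sum]
    congr 1
    have hfi : ∀ i : Fin k, (0:ℝ) < f i := by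
      intro i
      exact_mod_cast hP _ (Fintype.mem_piFinset.mp hf i)
    have hlog : Real.log ((∏ i, f i : ℕ) : ℝ) = ∑ i, Real.log (f i) := by
      push_cast
      exact Real.log_prod (fun i _ => (hfi i).ne')
    rw [hlog]
    push_cast
    rw [← Finset.sum_neg_distrib, Finset.mul_sum]
  have habs : (‖z‖)^(2*k) = (z^k * (starRingEnd ℂ) (z^k)).re := by
    rw [Complex.mul_conj, pow_mul, Complex.sq_norm]
    norm_cast
    exact (map_pow Complex.normSq z k).symm
  rw [habs, hzk, map_sum, Finset.sum_mul_sum, Complex.re_sum]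
  apply Finset.sum_congr rfl
  intro f _
  rw [Complex.re_sum]
  apply Finset.sum_congr rfl
  intro g _
  rw [pair_term]



lemma exp_cont (θ : ℝ) : Continuous fun t : ℝ => Complex.exp (Complex.I * t * θ) := by
  apply Complex.continuous_exp.comp
  exact (continuous_const.mul Complex.continuous_ofReal).mul continuous_const

lemma term_integral_bound (w : ℂ) (T : ℝ) (hT : 0 ≤ T) (M n₁ n₂ : ℕ)
    (h1 : 1 ≤ n₁) (h2 : 1 ≤ n₂) (h1M : n₁ ≤ M) (h2M : n₂ ≤ M) :
    (∫ t in T..(2*T), (w * Complex.exp (Complex.I * t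
        * Complex.ofReal (Real.log n₂ - Real.log n₁))).re)
      ≤ ‖w‖ * (if n₁ = n₂ then T else 2*M/|(n₁:ℝ) - (n₂:ℝ)|) := by
  set θ : ℝ := Real.log n₂ - Real.log n₁ with hθdef
  have hcont : Continuous fun t : ℝ => w * Complex.exp (Complex.I * t * θ) :=
    continuous_const.mul (exp_cont θ)
  have hre : (∫ t in T..(2*T), (w * Complex.exp (Complex.I * t * θ)).re)
      = (∫ t in T..(2*T), w * Complex.exp (Complex.I * t * θ)).re := by
    have h := Complex.reCLM.intervalIntegral_comp_comm
      (μ := MeasureTheory.volume) (hcont.intervalIntegrable T (2*T))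
    simpa using h
  rw [hre, intervalIntegral.integral_const_mul]
  by_cases heq : n₁ = n₂
  · subst heq
    rw [if_pos rfl]
    have hθ0 : θ = 0 := by rw [hθdef]; ring
    rw [hθ0]
    simp only [Complex.ofReal_zero, mul_zero, Complex.exp_zero]
    rw [intervalIntegral.integral_const]
    have hsm : (2*T - T) • (1:ℂ) = ((T:ℝ):ℂ) := by
      rw [Complex.real_smul]; push_cast; ring
    rw [hsm]
    calc (w * ((T:ℝ):ℂ)).re ≤ ‖w * ((T:ℝ):ℂ)‖ := Complex.re_le_norm _
    _ = ‖w‖ * T := by rw [norm_mul, Complex.norm_of_nonneg hT]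
  · rw [if_neg heq]
    have hθne : θ ≠ 0 := by
      rw [hθdef]
      intro h
      apply heq
      have := Real.log_injOn_pos (Set.mem_Ioi.mpr (by exact_mod_cast h1 : (0:ℝ) < n₁))
        (Set.mem_Ioi.mpr (by exact_mod_cast h2 : (0:ℝ) < n₂)) (by linarith)
      exact_mod_cast this
    calc (w * ∫ t in T..(2*T), Complex.exp (Complex.I * t * θ)).re
        ≤ ‖w * ∫ t in T..(2*T), Complex.exp (Complex.I * t * θ)‖ :=
          Complex.re_le_norm _
    _ = ‖w‖ * ‖∫ t in T..(2*T), Complex.exp (Complex.I * t * θ)‖ :=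
          norm_mul _ _
    _ ≤ ‖w‖ * (2 / |θ|) := by
          exact mul_le_mul_of_nonneg_left (osc_bound θ T hθne) (norm_nonneg w)
    _ ≤ ‖w‖ * (2*M/|(n₁:ℝ) - (n₂:ℝ)|) := by
          apply mul_le_mul_of_nonneg_left _ (norm_nonneg w)
          have hgap : |(n₂:ℝ) - (n₁:ℝ)| / M ≤ |θ| := log_gap h1 h2 h1M h2M heq
          have hΔ : (0:ℝ) < |(n₁:ℝ) - (n₂:ℝ)| := by
            rw [abs_pos, sub_ne_zero]
            exact_mod_cast heq
          have hM0 : (0:ℝ) < M := by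
            have : (0:ℝ) < n₁ := by exact_mod_cast h1
            exact lt_of_lt_of_le this (by exact_mod_cast h1M)
          have hcomm : |(n₂:ℝ) - (n₁:ℝ)| = |(n₁:ℝ) - (n₂:ℝ)| := abs_sub_comm _ _
          rw [hcomm] at hgap
          have hpos : (0:ℝ) < |(n₁:ℝ) - (n₂:ℝ)| / M := div_pos hΔ hM0
          calc 2 / |θ| ≤ 2 / (|(n₁:ℝ) - (n₂:ℝ)| / M) :=
                div_le_div_of_nonneg_left (by norm_num) hpos hgap
          _ = 2*M/|(n₁:ℝ) - (n₂:ℝ)| := by field_simp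



lemma main_bound (T : ℝ) (hT0 : 0 < T) (M : ℕ) (hM1 : 1 ≤ M) (k : ℕ)
    (hMlog : (M:ℝ) * (2*(1 + Real.log M)) ≤ 4*T)
    (P : Finset ℕ) (hP : ∀ p ∈ P, Nat.Prime p) (a : ℕ → ℂ)
    (hFM : ∀ f ∈ (Fintype.piFinset fun _ : Fin k => P), 1 ≤ ∏ i, f i ∧ (∏ i, f i) ≤ M) :
    ∑ f ∈ (Fintype.piFinset fun _ : Fin k => P),
      ∑ g ∈ (Fintype.piFinset fun _ : Fin k => P),
        (∫ t in T..(2*T), ((∏ i, a (f i)) * (starRingEnd ℂ) (∏ i, a (g i))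
          * Complex.exp (Complex.I * t *
            Complex.ofReal (Real.log ((∏ i, g i : ℕ) : ℝ)
              - Real.log ((∏ i, f i : ℕ) : ℝ)))).re)
      ≤ 9 * T * k.factorial * (∑ p ∈ P, (‖a p‖)^2)^k := by
  set F := (Fintype.piFinset fun _ : Fin k => P) with hF
  set x : (Fin k → ℕ) → ℝ := fun f => ‖∏ i, a (f i)‖ with hx
  set W : (Fin k → ℕ) → (Fin k → ℕ) → ℝ := fun f g =>
    if (∏ i, f i) = (∏ i, g i) then T else 2*M/|((∏ i, f i : ℕ):ℝ) - ((∏ i, g i : ℕ):ℝ)| with hW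
  have hWnn : ∀ f g, 0 ≤ W f g := by
    intro f g
    rw [hW]
    dsimp only
    split
    · exact hT0.le
    · positivity
  have hWsymm : ∀ f g, W f g = W g f := by
    intro f g
    rw [hW]
    dsimp only
    rcases eq_or_ne (∏ i, f i) (∏ i, g i) with h | h
    · rw [if_pos h, if_pos h.symm]
    · rw [if_neg h, if_neg (Ne.symm h), abs_sub_comm]
  -- step 1: bound each integral
  have step1 : ∀ f ∈ F, ∀ g ∈ F,
      (∫ t in T..(2*T), ((∏ i, a (f i)) * (starRingEnd ℂ) (∏ i, a (g i))
          * Complex.exp (Complex.I * t *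
            Complex.ofReal (Real.log ((∏ i, g i : ℕ) : ℝ)
              - Real.log ((∏ i, f i : ℕ) : ℝ)))).re)
        ≤ x f * x g * W f g := by
    intro f hf g hg
    have h := term_integral_bound ((∏ i, a (f i)) * (starRingEnd ℂ) (∏ i, a (g i))) T hT0.le M
      (∏ i, f i) (∏ i, g i) (hFM f hf).1 (hFM g hg).1 (hFM f hf).2 (hFM g hg).2
    calc _ ≤ _ := h
    _ = x f * x g * W f g := by
        rw [norm_mul, Complex.norm_conj]
  -- inner sum bound
  have hinner : ∀ f ∈ F, ∑ g ∈ F, W f g ≤ 9 * k.factorial * T := by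
    intro f hf
    set m := ∏ i, f i with hm
    have hm1 : 1 ≤ m := (hFM f hf).1
    have hmM : m ≤ M := (hFM f hf).2
    have hsplit : ∑ g ∈ F, W f g
        = (∑ g ∈ F.filter (fun g => m = ∏ i, g i), T)
          + ∑ g ∈ F.filter (fun g => ¬ m = ∏ i, g i), 2*M/|(m:ℝ) - ((∏ i, g i : ℕ):ℝ)| := by
      rw [hW]
      exact Finset.sum_ite _ _
    have hcard1 : (F.filter (fun g => m = ∏ i, g i)).card ≤ k.factorial := by
      have : F.filter (fun g => m = ∏ i, g i) = F.filter (fun g => ∏ i, g i = m) := by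
        apply Finset.filter_congr
        intro g _
        exact eq_comm
      rw [this]
      exact fiber_card_le P hP m
    have hbd1 : (∑ g ∈ F.filter (fun g => m = ∏ i, g i), T) ≤ k.factorial * T := by
      rw [Finset.sum_const, nsmul_eq_mul]
      exact mul_le_mul_of_nonneg_right (by exact_mod_cast hcard1) hT0.le
    have hbd2 : (∑ g ∈ F.filter (fun g => ¬ m = ∏ i, g i),
        2*M/|(m:ℝ) - ((∏ i, g i : ℕ):ℝ)|) ≤ (k.factorial : ℝ) * (8 * T) := by
      set F' := F.filter (fun g => ¬ m = ∏ i, g i) with hF'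
      set t := (Finset.Icc 1 M).filter (· ≠ m) with ht
      have hmaps : ∀ g ∈ F', (∏ i, g i) ∈ t := by
        intro g hg
        rw [hF', Finset.mem_filter] at hg
        rw [ht, Finset.mem_filter, Finset.mem_Icc]
        exact ⟨⟨(hFM g hg.1).1, (hFM g hg.1).2⟩, fun h => hg.2 h.symm⟩
      have hfib : ∑ n ∈ t, ∑ g ∈ F'.filter (fun g => ∏ i, g i = n),
          (2*(M:ℝ)/|(m:ℝ) - (n:ℝ)|)
          = ∑ g ∈ F', 2*M/|(m:ℝ) - ((∏ i, g i : ℕ):ℝ)| :=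
        Finset.sum_fiberwise_of_maps_to' hmaps _
      rw [← hfib]
      have hstep : ∀ n ∈ t, ∑ g ∈ F'.filter (fun g => ∏ i, g i = n),
          (2*(M:ℝ)/|(m:ℝ) - (n:ℝ)|) ≤ (k.factorial : ℝ) * (2*(M:ℝ) * (1/|(m:ℝ) - (n:ℝ)|)) := by
        intro n hn
        rw [Finset.sum_const, nsmul_eq_mul]
        have hsub : F'.filter (fun g => ∏ i, g i = n) ⊆ F.filter (fun g => ∏ i, g i = n) := by
          intro g hg
          simp only [hF', Finset.mem_filter] at hg ⊢
          exact ⟨hg.1.1, hg.2⟩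
        have hc : (F'.filter (fun g => ∏ i, g i = n)).card ≤ k.factorial :=
          le_trans (Finset.card_le_card hsub) (fiber_card_le P hP n)
        calc (F'.filter (fun g => ∏ i, g i = n)).card * (2*(M:ℝ)/|(m:ℝ) - (n:ℝ)|)
            ≤ (k.factorial : ℝ) * (2*(M:ℝ)/|(m:ℝ) - (n:ℝ)|) := by
              apply mul_le_mul_of_nonneg_right (by exact_mod_cast hc) (by positivity)
        _ = (k.factorial : ℝ) * (2*(M:ℝ) * (1/|(m:ℝ) - (n:ℝ)|)) := by ring
      calc ∑ n ∈ t, ∑ g ∈ F'.filter (fun g => ∏ i, g i = n), (2*(M:ℝ)/|(m:ℝ) - (n:ℝ)|)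
          ≤ ∑ n ∈ t, (k.factorial : ℝ) * (2*(M:ℝ) * (1/|(m:ℝ) - (n:ℝ)|)) :=
            Finset.sum_le_sum hstep
      _ = (k.factorial : ℝ) * (2*(M:ℝ)) * ∑ n ∈ t, (1/|(m:ℝ) - (n:ℝ)|) := by
            rw [Finset.mul_sum]
            exact Finset.sum_congr rfl fun n _ => by ring
      _ ≤ (k.factorial : ℝ) * (2*(M:ℝ)) * (2*(1 + Real.log M)) := by
            apply mul_le_mul_of_nonneg_left (sum_inv_gap_le M m hm1 hmM) (by positivity)
      _ = (k.factorial : ℝ) * ((M:ℝ) * (2*(1 + Real.log M))) * 2 := by ring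
      _ ≤ (k.factorial : ℝ) * (4*T) * 2 := by
            apply mul_le_mul_of_nonneg_right _ (by norm_num)
            exact mul_le_mul_of_nonneg_left hMlog (by positivity)
      _ = (k.factorial : ℝ) * (8 * T) := by ring
    calc ∑ g ∈ F, W f g ≤ k.factorial * T + (k.factorial : ℝ) * (8*T) := by
          rw [hsplit]; exact add_le_add hbd1 hbd2
    _ = 9 * k.factorial * T := by ring
  -- x-squared sum
  have hxsum : ∑ f ∈ F, (x f)^2 = (∑ p ∈ P, (‖a p‖)^2)^k := by
    rw [show (∑ p ∈ P, (‖a p‖)^2)^k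
        = ∏ _i : Fin k, ∑ p ∈ P, (‖a p‖)^2 by
      rw [Finset.prod_const, Finset.card_univ, Fintype.card_fin]]
    rw [Finset.prod_univ_sum]
    apply Finset.sum_congr rfl
    intro f _
    rw [hx]
    dsimp only
    rw [norm_prod]
    exact (Finset.prod_pow _ _ _).symm
  have hterm1 : ∑ f ∈ F, ∑ g ∈ F, (x f)^2/2 * W f g
      ≤ (9 * k.factorial * T / 2) * (∑ p ∈ P, (‖a p‖)^2)^k := by
    calc ∑ f ∈ F, ∑ g ∈ F, (x f)^2/2 * W f g
        = ∑ f ∈ F, (x f)^2/2 * ∑ g ∈ F, W f g :=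
          Finset.sum_congr rfl fun f _ => (Finset.mul_sum _ _ _).symm
    _ ≤ ∑ f ∈ F, (x f)^2/2 * (9 * k.factorial * T) :=
          Finset.sum_le_sum fun f hf => mul_le_mul_of_nonneg_left (hinner f hf) (by positivity)
    _ = (9 * k.factorial * T / 2) * ∑ f ∈ F, (x f)^2 := by
          rw [Finset.mul_sum]
          exact Finset.sum_congr rfl fun f _ => by ring
    _ = (9 * k.factorial * T / 2) * (∑ p ∈ P, (‖a p‖)^2)^k := by rw [hxsum]
  have hterm2 : ∑ f ∈ F, ∑ g ∈ F, (x g)^2/2 * W f g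
      ≤ (9 * k.factorial * T / 2) * (∑ p ∈ P, (‖a p‖)^2)^k := by
    calc ∑ f ∈ F, ∑ g ∈ F, (x g)^2/2 * W f g
        = ∑ g ∈ F, ∑ f ∈ F, (x g)^2/2 * W f g := Finset.sum_comm
    _ = ∑ g ∈ F, ∑ f ∈ F, (x g)^2/2 * W g f :=
          Finset.sum_congr rfl fun g _ => Finset.sum_congr rfl fun f _ => by rw [hWsymm f g]
    _ = ∑ g ∈ F, (x g)^2/2 * ∑ f ∈ F, W g f :=
          Finset.sum_congr rfl fun g _ => (Finset.mul_sum _ _ _).symm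
    _ ≤ ∑ g ∈ F, (x g)^2/2 * (9 * k.factorial * T) :=
          Finset.sum_le_sum fun g hg => mul_le_mul_of_nonneg_left (hinner g hg) (by positivity)
    _ = (9 * k.factorial * T / 2) * ∑ g ∈ F, (x g)^2 := by
          rw [Finset.mul_sum]
          exact Finset.sum_congr rfl fun g _ => by ring
    _ = (9 * k.factorial * T / 2) * (∑ p ∈ P, (‖a p‖)^2)^k := by rw [hxsum]
  calc ∑ f ∈ F, ∑ g ∈ F, (∫ t in T..(2*T), ((∏ i, a (f i)) * (starRingEnd ℂ) (∏ i, a (g i))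
          * Complex.exp (Complex.I * t *
            Complex.ofReal (Real.log ((∏ i, g i : ℕ) : ℝ)
              - Real.log ((∏ i, f i : ℕ) : ℝ)))).re)
      ≤ ∑ f ∈ F, ∑ g ∈ F, x f * x g * W f g :=
        Finset.sum_le_sum fun f hf => Finset.sum_le_sum fun g hg => step1 f hf g hg
  _ ≤ ∑ f ∈ F, ∑ g ∈ F, ((x f)^2/2 * W f g + (x g)^2/2 * W f g) := by
        apply Finset.sum_le_sum
        intro f _
        apply Finset.sum_le_sum
        intro g _
        have h1 : x f * x g ≤ ((x f)^2 + (x g)^2)/2 := by nlinarith [sq_nonneg (x f - x g)]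
        have h2 := mul_le_mul_of_nonneg_right h1 (hWnn f g)
        linarith [h2]
  _ = (∑ f ∈ F, ∑ g ∈ F, (x f)^2/2 * W f g) + ∑ f ∈ F, ∑ g ∈ F, (x g)^2/2 * W f g := by
        rw [← Finset.sum_add_distrib]
        exact Finset.sum_congr rfl fun f _ => Finset.sum_add_distrib
  _ ≤ (9 * k.factorial * T / 2) * (∑ p ∈ P, (‖a p‖)^2)^k
      + (9 * k.factorial * T / 2) * (∑ p ∈ P, (‖a p‖)^2)^k := add_le_add hterm1 hterm2
  _ = 9 * T * k.factorial * (∑ p ∈ P, (‖a p‖)^2)^k := by ring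




lemma interchange (T : ℝ) (k : ℕ) (P : Finset ℕ) (a : ℕ → ℂ) :
    (∫ t in T..(2*T), ∑ f ∈ (Fintype.piFinset fun _ : Fin k => P),
        ∑ g ∈ (Fintype.piFinset fun _ : Fin k => P),
          ((∏ i, a (f i)) * (starRingEnd ℂ) (∏ i, a (g i))
            * Complex.exp (Complex.I * t *
              Complex.ofReal (Real.log ((∏ i, g i : ℕ) : ℝ)
                - Real.log ((∏ i, f i : ℕ) : ℝ)))).re)
    = ∑ f ∈ (Fintype.piFinset fun _ : Fin k => P),
        ∑ g ∈ (Fintype.piFinset fun _ : Fin k => P),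
          (∫ t in T..(2*T), ((∏ i, a (f i)) * (starRingEnd ℂ) (∏ i, a (g i))
            * Complex.exp (Complex.I * t *
              Complex.ofReal (Real.log ((∏ i, g i : ℕ) : ℝ)
                - Real.log ((∏ i, f i : ℕ) : ℝ)))).re) := by
  have hGcont : ∀ (w : ℂ) (θ : ℝ),
      Continuous fun t : ℝ => (w * Complex.exp (Complex.I * t * Complex.ofReal θ)).re :=
    fun w θ => Complex.continuous_re.comp (continuous_const.mul (exp_cont θ))
  rw [intervalIntegral.integral_finset_sum (fun f _ =>
    (continuous_finset_sum _ fun g _ => hGcont _ _).intervalIntegrable T (2*T))]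
  exact Finset.sum_congr rfl fun f _ => intervalIntegral.integral_finset_sum
    (fun g _ => ((hGcont _ _)).intervalIntegrable _ _)

set_option maxHeartbeats 1000000 in
/-- Soundararajan's moment bound for Dirichlet polynomials supported on primes:
if `N^k ≤ T/log T` then `∫_T^{2T} |∑_{p ≤ N} a_p p^{-it}|^{2k} dt ≪ T k! (∑ |a_p|²)^k`. -/
theorem stmt5 : ∃ C > 0, ∀ (T : ℝ) (N k : ℕ) (a : ℕ → ℂ), 3 ≤ T → 1 ≤ k →
    (N : ℝ) ^ k ≤ T / Real.log T →
    (∫ t in T..(2 * T),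
      ‖∑ p ∈ (Finset.range (N + 1)).filter Nat.Prime,
        a p * (p : ℂ) ^ (-(Complex.I * (t : ℂ)))‖ ^ (2 * k))
    ≤ C * T * k.factorial *
        (∑ p ∈ (Finset.range (N + 1)).filter Nat.Prime, ‖a p‖ ^ 2) ^ k := by
  refine ⟨16, by norm_num, ?_⟩
  intro T N k a hT hk hNk
  have hT0 : (0:ℝ) < T := by linarith
  have hAnn : (0:ℝ) ≤ ∑ p ∈ (Finset.range (N+1)).filter Nat.Prime, (‖a p‖)^2 :=
    Finset.sum_nonneg fun p _ => sq_nonneg _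
  by_cases hN2 : N < 2
  · have hPe : (Finset.range (N+1)).filter Nat.Prime = ∅ := by
      ext p
      simp only [Finset.mem_filter, Finset.mem_range, Finset.notMem_empty, iff_false, not_and]
      intro hp hpp
      have := hpp.two_le
      omega
    rw [hPe]
    have hk0 : k ≠ 0 := by omega
    have h2k : 2*k ≠ 0 := by omega
    simp only [Finset.sum_empty, norm_zero, zero_pow h2k, zero_pow hk0,
      intervalIntegral.integral_zero, mul_zero]
    norm_num
  · push_neg at hN2
    set P := (Finset.range (N+1)).filter Nat.Prime with hPdef
    have hPmem : ∀ p ∈ P, Nat.Prime p := fun p hp => (Finset.mem_filter.mp hp).2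
    have hPpos : ∀ p ∈ P, 0 < p := fun p hp => (hPmem p hp).pos
    have hPle : ∀ p ∈ P, p ≤ N := by
      intro p hp
      have h := (Finset.mem_filter.mp hp).1
      rw [Finset.mem_range] at h
      omega
    set M := N ^ k with hMdef
    have hM1 : 1 ≤ M := Nat.one_le_pow _ _ (by omega)
    have hFM : ∀ f ∈ (Fintype.piFinset fun _ : Fin k => P), 1 ≤ ∏ i, f i ∧ (∏ i, f i) ≤ M := by
      intro f hf
      have hm := Fintype.mem_piFinset.mp hf
      constructor
      · exact Nat.one_le_iff_ne_zero.mpr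
          (Finset.prod_ne_zero_iff.mpr fun i _ => (hPpos _ (hm i)).ne')
      · calc ∏ i, f i ≤ ∏ _i : Fin k, N := Finset.prod_le_prod' fun i _ => hPle _ (hm i)
        _ = M := by rw [Finset.prod_const, Finset.card_univ, Fintype.card_fin]
    have hexpT : Real.exp 1 ≤ T := by
      have h := Real.exp_one_lt_d9
      have h2 : (2.7182818286 : ℝ) ≤ 3 := by norm_num
      linarith
    have hlogT : 1 ≤ Real.log T := (Real.le_log_iff_exp_le hT0).mpr hexpT
    have hMle : (M:ℝ) ≤ T / Real.log T := by rw [hMdef]; push_cast; exact hNk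
    have hMT : (M:ℝ) ≤ T := hMle.trans (div_le_self hT0.le hlogT)
    have hM0 : (0:ℝ) < M := by exact_mod_cast hM1
    have hlogM : Real.log M ≤ Real.log T := (Real.log_le_log_iff hM0 hT0).mpr hMT
    have hlogM0 : 0 ≤ Real.log M := Real.log_nonneg (by exact_mod_cast hM1)
    have hMlog : (M:ℝ) * (2*(1 + Real.log M)) ≤ 4*T := by
      have h1 : 2*(1 + Real.log M) ≤ 4 * Real.log T := by linarith
      have hlogT0 : (0:ℝ) < Real.log T := by linarith
      calc (M:ℝ) * (2*(1+Real.log M)) ≤ (T / Real.log T) * (4 * Real.log T) := by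
            apply mul_le_mul hMle h1 (by positivity) (by positivity)
      _ = 4 * T := by field_simp
    have hGcont : ∀ (w : ℂ) (θ : ℝ),
        Continuous fun t : ℝ => (w * Complex.exp (Complex.I * t * Complex.ofReal θ)).re :=
      fun w θ => Complex.continuous_re.comp (continuous_const.mul (exp_cont θ))
    have hrw : (∫ t in T..(2*T),
          (‖∑ p ∈ P, a p * (p:ℂ) ^ (-(Complex.I * (t:ℂ)))‖)^(2*k))
        = ∑ f ∈ (Fintype.piFinset fun _ : Fin k => P),
            ∑ g ∈ (Fintype.piFinset fun _ : Fin k => P),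
              (∫ t in T..(2*T), ((∏ i, a (f i)) * (starRingEnd ℂ) (∏ i, a (g i))
                * Complex.exp (Complex.I * t *
                  Complex.ofReal (Real.log ((∏ i, g i : ℕ) : ℝ)
                    - Real.log ((∏ i, f i : ℕ) : ℝ)))).re) := by
      simp only [expand_pointwise P hPpos a k]
      exact interchange T k P a
    calc (∫ t in T..(2*T),
          (‖∑ p ∈ P, a p * (p:ℂ) ^ (-(Complex.I * (t:ℂ)))‖)^(2*k))
        = _ := hrw
    _ ≤ 9 * T * k.factorial * (∑ p ∈ P, (‖a p‖)^2)^k :=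
        main_bound T hT0 M hM1 k hMlog P hPmem a hFM
    _ ≤ 16 * T * k.factorial * (∑ p ∈ P, (‖a p‖)^2)^k := by
        have hA : (0:ℝ) ≤ (∑ p ∈ P, (‖a p‖)^2)^k := pow_nonneg hAnn k
        have hkf : (0:ℝ) ≤ (k.factorial : ℝ) := by positivity
        have h9 : (9:ℝ) * T * k.factorial ≤ 16 * T * k.factorial := by nlinarith
        exact mul_le_mul_of_nonneg_right h9 hA
end
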